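/- For α outside the interval [P′(−∞), P′(+∞)], the level set E(α) = {x ∈ Σ_m : lim (1/n) Σ_{k=1}^n φ(x_k, x_{2k}) = α} is empty. -/

import Mathlib

open Filter Finset Real

set_option linter.unusedVariables false
set_option linter.unusedSectionVars false


lemma hoelder_sum {ι : Type*} [Fintype ι] [Nonempty ι] (X Y : ι → ℝ) {a b : ℝ}
    (ha : 0 ≤ a) (hb : 0 ≤ b) (hab : a + b = 1) :
    ∑ j, Real.exp (a * X j + b * Y j) ≤
      (∑ j, Real.exp (X j)) ^ a * (∑ j, Real.exp (Y j)) ^ b := by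
  set A := ∑ j, Real.exp (X j) with hAdef
  set B := ∑ j, Real.exp (Y j) with hBdef
  have hA : 0 < A := Finset.sum_pos (fun j _ => Real.exp_pos _) univ_nonempty
  have hB : 0 < B := Finset.sum_pos (fun j _ => Real.exp_pos _) univ_nonempty
  have key : ∀ j : ι, Real.exp (a * X j + b * Y j) ≤
      A ^ a * B ^ b * (a * (Real.exp (X j) / A) + b * (Real.exp (Y j) / B)) := by
    intro j
    have h1 : Real.exp (a * X j + b * Y j)
        = A ^ a * B ^ b * ((Real.exp (X j) / A) ^ a * (Real.exp (Y j) / B) ^ b) := by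
      rw [Real.exp_add, mul_comm a (X j), mul_comm b (Y j), Real.exp_mul, Real.exp_mul,
        Real.div_rpow (Real.exp_nonneg _) hA.le, Real.div_rpow (Real.exp_nonneg _) hB.le]
      have hAa : (0:ℝ) < A ^ a := Real.rpow_pos_of_pos hA a
      have hBb : (0:ℝ) < B ^ b := Real.rpow_pos_of_pos hB b
      field_simp
    rw [h1]
    have : (Real.exp (X j) / A) ^ a * (Real.exp (Y j) / B) ^ b ≤
        a * (Real.exp (X j) / A) + b * (Real.exp (Y j) / B) :=
      Real.geom_mean_le_arith_mean2_weighted ha hb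
        (div_nonneg (Real.exp_nonneg _) hA.le) (div_nonneg (Real.exp_nonneg _) hB.le) hab
    have hpos : (0:ℝ) ≤ A ^ a * B ^ b :=
      le_of_lt (mul_pos (Real.rpow_pos_of_pos hA a) (Real.rpow_pos_of_pos hB b))
    exact mul_le_mul_of_nonneg_left this hpos
  calc ∑ j, Real.exp (a * X j + b * Y j)
      ≤ ∑ j, A ^ a * B ^ b * (a * (Real.exp (X j) / A) + b * (Real.exp (Y j) / B)) :=
        Finset.sum_le_sum fun j _ => key j
    _ = A ^ a * B ^ b * (a * (A / A) + b * (B / B)) := by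
        rw [← Finset.mul_sum]
        congr 1
        rw [Finset.sum_add_distrib, ← Finset.mul_sum, ← Finset.mul_sum,
          ← Finset.sum_div, ← Finset.sum_div]
    _ = A ^ a * B ^ b := by
        rw [div_self hA.ne', div_self hB.ne']
        rw [mul_one, mul_one, hab, mul_one]




lemma sum_exp_form {m : ℕ} [NeZero m] (φ : Fin m → Fin m → ℝ) (t : ℝ → Fin m → ℝ)
    (ht : ∀ s i, 0 < t s i)
    (heq : ∀ s i, (t s i) ^ 2 = ∑ j, Real.exp (s * φ i j) * t s j)
    (s : ℝ) (i : Fin m) :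
    (t s i) ^ 2 = ∑ j, Real.exp (s * φ i j + Real.log (t s j)) := by
  rw [heq]
  exact Finset.sum_congr rfl fun j _ => by rw [Real.exp_add, Real.exp_log (ht s j)]

lemma logt_convex {m : ℕ} [NeZero m] (φ : Fin m → Fin m → ℝ) (t : ℝ → Fin m → ℝ)
    (ht : ∀ s i, 0 < t s i)
    (heq : ∀ s i, (t s i) ^ 2 = ∑ j, Real.exp (s * φ i j) * t s j)
    {a b la mu : ℝ} (hla : 0 ≤ la) (hmu : 0 ≤ mu) (h1 : la + mu = 1)
    (i : Fin m) :
    Real.log (t (la * a + mu * b) i) ≤ la * Real.log (t a i) + mu * Real.log (t b i) := by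
  set c := la * a + mu * b with hc
  set g : Fin m → ℝ := fun i =>
    Real.log (t c i) - (la * Real.log (t a i) + mu * Real.log (t b i)) with hg
  have ne : (univ : Finset (Fin m)).Nonempty := univ_nonempty
  obtain ⟨i₀, -, hi₀⟩ := Finset.exists_mem_eq_sup' ne g
  set r := univ.sup' ne g with hr
  suffices hr0 : r ≤ 0 by
    have h3 : g i ≤ r := Finset.le_sup' g (mem_univ i)
    simp only [hg] at h3
    linarith [h3.trans hr0]
  set X : Fin m → ℝ := fun j => a * φ i₀ j + Real.log (t a j) with hX
  set Y : Fin m → ℝ := fun j => b * φ i₀ j + Real.log (t b j) with hY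
  have h2 : (t c i₀) ^ 2 ≤
      Real.exp r * (((t a i₀) ^ 2) ^ la * ((t b i₀) ^ 2) ^ mu) := by
    calc (t c i₀) ^ 2 = ∑ j, Real.exp (c * φ i₀ j + Real.log (t c j)) :=
          sum_exp_form φ t ht heq c i₀
      _ ≤ ∑ j, Real.exp (r + (la * X j + mu * Y j)) := by
          refine Finset.sum_le_sum fun j _ => Real.exp_le_exp.2 ?_
          have hgj : g j ≤ r := Finset.le_sup' g (mem_univ j)
          simp only [hg] at hgj
          have hcphi : c * φ i₀ j = la * (a * φ i₀ j) + mu * (b * φ i₀ j) := by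
            rw [hc]; ring
          simp only [hX, hY]
          nlinarith [hgj, hcphi]
      _ = Real.exp r * ∑ j, Real.exp (la * X j + mu * Y j) := by
          rw [Finset.mul_sum]
          exact Finset.sum_congr rfl fun j _ => by rw [Real.exp_add]
      _ ≤ Real.exp r * ((∑ j, Real.exp (X j)) ^ la * (∑ j, Real.exp (Y j)) ^ mu) :=
          mul_le_mul_of_nonneg_left (hoelder_sum X Y hla hmu h1) (Real.exp_nonneg r)
      _ = Real.exp r * (((t a i₀) ^ 2) ^ la * ((t b i₀) ^ 2) ^ mu) := by
          rw [← sum_exp_form φ t ht heq a i₀, ← sum_exp_form φ t ht heq b i₀]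
  have hposc : (0:ℝ) < (t c i₀) ^ 2 := pow_pos (ht c i₀) 2
  have hpa : (0:ℝ) < ((t a i₀) ^ 2) ^ la := Real.rpow_pos_of_pos (pow_pos (ht a i₀) 2) la
  have hpb : (0:ℝ) < ((t b i₀) ^ 2) ^ mu := Real.rpow_pos_of_pos (pow_pos (ht b i₀) 2) mu
  have hlog := Real.log_le_log hposc h2
  rw [Real.log_mul (Real.exp_ne_zero r) (mul_pos hpa hpb).ne', Real.log_exp,
    Real.log_mul hpa.ne' hpb.ne',
    Real.log_rpow (pow_pos (ht a i₀) 2), Real.log_rpow (pow_pos (ht b i₀) 2),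
    Real.log_pow, Real.log_pow, Real.log_pow] at hlog
  have hgi₀ : r = g i₀ := hi₀
  simp only [hg] at hgi₀
  push_cast at hlog
  linarith

lemma logt_lip {m : ℕ} [NeZero m] (φ : Fin m → Fin m → ℝ) (t : ℝ → Fin m → ℝ)
    (ht : ∀ s i, 0 < t s i)
    (heq : ∀ s i, (t s i) ^ 2 = ∑ j, Real.exp (s * φ i j) * t s j)
    {Φ : ℝ} (hΦ : ∀ i j, |φ i j| ≤ Φ) (a b : ℝ) (i : Fin m) :
    Real.log (t a i) - Real.log (t b i) ≤ Φ * |a - b| := by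
  set g : Fin m → ℝ := fun i => Real.log (t a i) - Real.log (t b i) with hg
  have ne : (univ : Finset (Fin m)).Nonempty := univ_nonempty
  obtain ⟨i₀, -, hi₀⟩ := Finset.exists_mem_eq_sup' ne g
  set r := univ.sup' ne g with hr
  suffices hr0 : r ≤ Φ * |a - b| by
    exact le_trans (Finset.le_sup' g (mem_univ i)) hr0
  have h2 : (t a i₀) ^ 2 ≤ Real.exp (Φ * |a - b| + r) * (t b i₀) ^ 2 := by
    calc (t a i₀) ^ 2 = ∑ j, Real.exp (a * φ i₀ j + Real.log (t a j)) :=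
          sum_exp_form φ t ht heq a i₀
      _ ≤ ∑ j, Real.exp (Φ * |a - b| + r + (b * φ i₀ j + Real.log (t b j))) := by
          refine Finset.sum_le_sum fun j _ => Real.exp_le_exp.2 ?_
          have hgj : g j ≤ r := Finset.le_sup' g (mem_univ j)
          simp only [hg] at hgj
          have habs : (a - b) * φ i₀ j ≤ Φ * |a - b| := by
            calc (a - b) * φ i₀ j ≤ |(a - b) * φ i₀ j| := le_abs_self _
              _ = |a - b| * |φ i₀ j| := abs_mul _ _
              _ ≤ |a - b| * Φ := mul_le_mul_of_nonneg_left (hΦ i₀ j) (abs_nonneg _)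
              _ = Φ * |a - b| := mul_comm _ _
          nlinarith [hgj, habs]
      _ = Real.exp (Φ * |a - b| + r) * ∑ j, Real.exp (b * φ i₀ j + Real.log (t b j)) := by
          rw [Finset.mul_sum]
          exact Finset.sum_congr rfl fun j _ => by rw [← Real.exp_add]
      _ = Real.exp (Φ * |a - b| + r) * (t b i₀) ^ 2 := by
          rw [← sum_exp_form φ t ht heq b i₀]
  have hlog := Real.log_le_log (pow_pos (ht a i₀) 2) h2
  rw [Real.log_mul (Real.exp_ne_zero _) (pow_pos (ht b i₀) 2).ne', Real.log_exp,
    Real.log_pow, Real.log_pow] at hlog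
  have hgi₀ : r = g i₀ := hi₀
  simp only [hg] at hgi₀
  push_cast at hlog
  linarith



lemma key_bound {m : ℕ} [NeZero m] (φ : Fin m → Fin m → ℝ) (t : ℝ → Fin m → ℝ)
    (ht : ∀ s i, 0 < t s i)
    (heq : ∀ s i, (t s i) ^ 2 = ∑ j, Real.exp (s * φ i j) * t s j)
    (x : ℕ → Fin m) (α : ℝ)
    (hx : Tendsto (fun n : ℕ => (n : ℝ)⁻¹ * ∑ k ∈ Icc 1 n, φ (x k) (x (2 * k)))
      atTop (nhds α)) (s : ℝ) :
    s * α ≤ Real.log (∑ i, t s i) := by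
  set u : Fin m → ℝ := fun i => Real.log (t s i) with hu
  have ne : (univ : Finset (Fin m)).Nonempty := univ_nonempty
  set Umax := univ.sup' ne u with hUmax
  set Umin := univ.inf' ne u with hUmin
  -- edge inequality
  have edge : ∀ i j, s * φ i j + u j ≤ 2 * u i := by
    intro i j
    have h1 : Real.exp (s * φ i j) * t s j ≤ (t s i) ^ 2 := by
      rw [heq s i]
      exact Finset.single_le_sum (f := fun k => Real.exp (s * φ i k) * t s k)
        (fun k _ => le_of_lt (mul_pos (Real.exp_pos _) (ht s k))) (mem_univ j)
    have h2 := Real.log_le_log (mul_pos (Real.exp_pos _) (ht s j)) h1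
    rw [Real.log_mul (Real.exp_ne_zero _) (ht s j).ne', Real.log_exp, Real.log_pow] at h2
    push_cast at h2
    simp only [hu]
    linarith
  set S : ℕ → ℝ := fun n => ∑ k ∈ Icc 1 n, φ (x k) (x (2 * k)) with hS
  set F : ℕ → ℝ := fun n => ∑ k ∈ Icc 1 n, u (x k) with hF
  -- splitting of F (2n)
  have hsplit : ∀ n : ℕ, F (2 * n) ≤ (∑ k ∈ Icc 1 n, u (x (2 * k))) + (n : ℝ) * Umax := by
    intro n
    have himg : (Icc 1 (2 * n)).filter (fun j => 2 ∣ j) = (Icc 1 n).image (fun k => 2 * k) := by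
      ext j
      simp only [mem_filter, mem_Icc, mem_image]
      constructor
      · rintro ⟨⟨h1, h2⟩, k, rfl⟩
        exact ⟨k, ⟨by omega, by omega⟩, rfl⟩
      · rintro ⟨k, ⟨h1, h2⟩, rfl⟩
        exact ⟨⟨by omega, by omega⟩, ⟨k, rfl⟩⟩
    have hinj : ∀ a ∈ Icc 1 n, ∀ b ∈ Icc 1 n, 2 * a = 2 * b → a = b := by
      intro a _ b _ h; omega
    have heven : ∑ j ∈ (Icc 1 (2 * n)).filter (fun j => 2 ∣ j), u (x j)
        = ∑ k ∈ Icc 1 n, u (x (2 * k)) := by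
      rw [himg, Finset.sum_image hinj]
    have hcard_even : ((Icc 1 (2 * n)).filter (fun j => 2 ∣ j)).card = n := by
      rw [himg, Finset.card_image_of_injOn hinj, Nat.card_Icc]
      omega
    have hcard_odd : ((Icc 1 (2 * n)).filter (fun j => ¬ 2 ∣ j)).card = n := by
      have := Finset.card_filter_add_card_filter_not
        (s := Icc 1 (2 * n)) (p := fun j => 2 ∣ j)
      rw [Nat.card_Icc] at this
      omega
    have hodd : ∑ j ∈ (Icc 1 (2 * n)).filter (fun j => ¬ 2 ∣ j), u (x j)
        ≤ (n : ℝ) * Umax := by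
      have := Finset.sum_le_card_nsmul ((Icc 1 (2 * n)).filter (fun j => ¬ 2 ∣ j))
        (fun j => u (x j)) Umax (fun j _ => Finset.le_sup' u (mem_univ (x j)))
      rwa [hcard_odd, nsmul_eq_mul] at this
    have hdecomp : F (2 * n) = (∑ j ∈ (Icc 1 (2 * n)).filter (fun j => 2 ∣ j), u (x j))
        + ∑ j ∈ (Icc 1 (2 * n)).filter (fun j => ¬ 2 ∣ j), u (x j) := by
      rw [hF]
      exact (Finset.sum_filter_add_sum_filter_not _ _ _).symm
    rw [hdecomp, heven]
    linarith
  -- edge sum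
  have hn : ∀ n : ℕ, s * S n + F (2 * n) ≤ 2 * F n + (n : ℝ) * Umax := by
    intro n
    have h1 : s * S n + (∑ k ∈ Icc 1 n, u (x (2 * k))) ≤ 2 * F n := by
      rw [hS, hF, Finset.mul_sum, Finset.mul_sum, ← Finset.sum_add_distrib]
      exact Finset.sum_le_sum fun k _ => edge (x k) (x (2 * k))
    linarith [hsplit n]
  have hFlow : ∀ n : ℕ, (n : ℝ) * Umin ≤ F n := by
    intro n
    have := Finset.card_nsmul_le_sum (Icc 1 n) (fun k => u (x k)) Umin
      (fun k _ => Finset.inf'_le u (mem_univ (x k)))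
    rwa [Nat.card_Icc, Nat.add_sub_cancel, nsmul_eq_mul] at this
  -- main bound: s * α ≤ Umax
  have hmain : s * α ≤ Umax := by
    by_contra hcon
    push_neg at hcon
    set δ := s * α - Umax with hδdef
    have hδ : 0 < δ := by simp only [hδdef]; linarith
    have hsS : Tendsto (fun n : ℕ => s * ((n : ℝ)⁻¹ * S n)) atTop (nhds (s * α)) :=
      hx.const_mul s
    have hev : ∀ᶠ n : ℕ in atTop, s * α - δ / 2 < s * ((n : ℝ)⁻¹ * S n) :=
      hsS.eventually (eventually_gt_nhds (by linarith))
    obtain ⟨N₀, hN₀⟩ := Filter.eventually_atTop.mp hev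
    set N := max N₀ 1 with hN
    have hN1 : 1 ≤ N := le_max_right _ _
    have key2 : ∀ n : ℕ, N ≤ n → F (2 * n) ≤ 2 * F n - (n : ℝ) * (δ / 2) := by
      intro n hnN
      have hn1 : 1 ≤ n := le_trans hN1 hnN
      have hnpos : (0 : ℝ) < n := by exact_mod_cast hn1
      have h3 := hN₀ n (le_trans (le_max_left _ _) hnN)
      have h4 : s * ((n : ℝ)⁻¹ * S n) = (s * S n) / n := by field_simp
      rw [h4] at h3
      have h5 : (s * α - δ / 2) * n < s * S n := (lt_div_iff₀ hnpos).mp h3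
      have h6 := hn n
      have h7 : (n : ℝ) * Umax = n * (s * α) - n * δ := by rw [hδdef]; ring
      nlinarith
    have ind : ∀ j : ℕ, F (2 ^ j * N) ≤ 2 ^ j * F N - (j : ℝ) * 2 ^ j * ((N : ℝ) * (δ / 4)) := by
      intro j
      induction j with
      | zero => simp
      | succ j ih =>
        have hpow : 2 ^ (j + 1) * N = 2 * (2 ^ j * N) := by ring
        have hge : N ≤ 2 ^ j * N := Nat.le_mul_of_pos_left N (Nat.pow_pos (n := j) (by norm_num))
        have h8 := key2 (2 ^ j * N) hge
        rw [hpow]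
        have hc : ((2 ^ j * N : ℕ) : ℝ) = 2 ^ j * N := by push_cast; ring
        rw [hc] at h8
        push_cast
        push_cast at ih
        calc F (2 * (2 ^ j * N)) ≤ 2 * (2 ^ j * F N - (j : ℝ) * 2 ^ j * ((N : ℝ) * (δ / 4)))
              - 2 ^ j * (N : ℝ) * (δ / 2) := by linarith
          _ = 2 ^ (j + 1) * F N - ((j : ℝ) + 1) * 2 ^ (j + 1) * ((N : ℝ) * (δ / 4)) := by ring
    obtain ⟨j, hj⟩ := exists_nat_gt ((F N - (N : ℝ) * Umin) / ((N : ℝ) * (δ / 4)))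
    have hNpos : (0 : ℝ) < N := by exact_mod_cast hN1
    have hNδ : (0 : ℝ) < (N : ℝ) * (δ / 4) := by positivity
    have hj2 : F N - (N : ℝ) * Umin < j * ((N : ℝ) * (δ / 4)) := by
      calc F N - (N : ℝ) * Umin ≤ ((F N - (N : ℝ) * Umin) / ((N : ℝ) * (δ / 4))) * ((N : ℝ) * (δ / 4)) := by
            rw [div_mul_cancel₀ _ hNδ.ne']
        _ < j * ((N : ℝ) * (δ / 4)) := by
            exact mul_lt_mul_of_pos_right hj hNδ
    have h9 := hFlow (2 ^ j * N)
    have h10 := ind j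
    have hc : ((2 ^ j * N : ℕ) : ℝ) = 2 ^ j * N := by push_cast; ring
    rw [hc] at h9
    have h2j : (0 : ℝ) < 2 ^ j := by positivity
    nlinarith [h9, h10, hj2, h2j]
  -- from Umax to log of sum
  obtain ⟨i₀, -, hi₀⟩ := Finset.exists_mem_eq_sup' ne u
  have hle : t s i₀ ≤ ∑ i, t s i :=
    Finset.single_le_sum (fun i _ => (ht s i).le) (mem_univ i₀)
  have := Real.log_le_log (ht s i₀) hle
  calc s * α ≤ Umax := hmain
    _ = u i₀ := hi₀
    _ ≤ Real.log (∑ i, t s i) := this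


lemma freq_diff_atTop {P : ℝ → ℝ} {K : NNReal} (hlip : LipschitzWith K P) :
    ∃ᶠ c in atTop, DifferentiableAt ℝ P c := by
  have hae : ∀ᵐ x ∂MeasureTheory.volume, DifferentiableAt ℝ P x :=
    hlip.ae_differentiableAt
  rw [Filter.frequently_atTop]
  intro M
  by_contra hcon
  push_neg at hcon
  have hsub : Set.Ici M ⊆ {x | ¬ DifferentiableAt ℝ P x} := fun c hc => hcon c hc
  have h0 : MeasureTheory.volume {x | ¬ DifferentiableAt ℝ P x} = 0 := by
    rw [← MeasureTheory.ae_iff] at *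
    exact hae
  have := MeasureTheory.measure_mono_null hsub h0
  rw [Real.volume_Ici] at this
  simp at this

lemma freq_diff_atBot {P : ℝ → ℝ} {K : NNReal} (hlip : LipschitzWith K P) :
    ∃ᶠ c in atBot, DifferentiableAt ℝ P c := by
  have hae : ∀ᵐ x ∂MeasureTheory.volume, DifferentiableAt ℝ P x :=
    hlip.ae_differentiableAt
  rw [Filter.frequently_atBot]
  intro M
  by_contra hcon
  push_neg at hcon
  have hsub : Set.Iic M ⊆ {x | ¬ DifferentiableAt ℝ P x} := fun c hc => hcon c hc
  have h0 : MeasureTheory.volume {x | ¬ DifferentiableAt ℝ P x} = 0 := by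
    rw [← MeasureTheory.ae_iff] at *
    exact hae
  have := MeasureTheory.measure_mono_null hsub h0
  rw [Real.volume_Iic] at this
  simp at this

lemma slope_le_Pp {P : ℝ → ℝ} {K : NNReal} {Pp : ℝ}
    (hconv : ConvexOn ℝ Set.univ P) (hlip : LipschitzWith K P)
    (hPp : Tendsto (deriv P) atTop (nhds Pp)) {a b : ℝ} (hab : a < b) :
    (P b - P a) / (b - a) ≤ Pp := by
  by_contra hgt
  push_neg at hgt
  have hev1 : ∀ᶠ c in atTop, deriv P c < (P b - P a) / (b - a) :=
    hPp.eventually (eventually_lt_nhds hgt)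
  have hev2 : ∀ᶠ c in atTop, b < c := eventually_gt_atTop b
  obtain ⟨c, hdiff, h1, h2⟩ := ((freq_diff_atTop hlip).and_eventually (hev1.and hev2)).exists
  have hs1 : (P b - P a) / (b - a) ≤ (P c - P a) / (c - a) :=
    hconv.secant_mono (Set.mem_univ a) (Set.mem_univ b) (Set.mem_univ c)
      hab.ne' (hab.trans h2).ne' h2.le
  have hs2 : slope P a c ≤ deriv P c :=
    hconv.slope_le_deriv (Set.mem_univ a) (Set.mem_univ c) (hab.trans h2) hdiff
  rw [slope_def_field] at hs2
  linarith
  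
lemma Pm_le_slope {P : ℝ → ℝ} {K : NNReal} {Pm : ℝ}
    (hconv : ConvexOn ℝ Set.univ P) (hlip : LipschitzWith K P)
    (hPm : Tendsto (deriv P) atBot (nhds Pm)) {a b : ℝ} (hab : a < b) :
    Pm ≤ (P b - P a) / (b - a) := by
  by_contra hgt
  push_neg at hgt
  have hev1 : ∀ᶠ c in atBot, (P b - P a) / (b - a) < deriv P c :=
    hPm.eventually (eventually_gt_nhds hgt)
  have hev2 : ∀ᶠ c in atBot, c < a := eventually_lt_atBot a
  obtain ⟨c, hdiff, h1, h2⟩ := ((freq_diff_atBot hlip).and_eventually (hev1.and hev2)).exists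
  have hs1 : (P c - P b) / (c - b) ≤ (P a - P b) / (a - b) :=
    hconv.secant_mono (Set.mem_univ b) (Set.mem_univ c) (Set.mem_univ a)
      (h2.trans hab).ne (hab.ne) (h2.le)
  have hs2 : deriv P c ≤ slope P c b :=
    hconv.deriv_le_slope (Set.mem_univ c) (Set.mem_univ b) (h2.trans hab) hdiff
  rw [slope_def_field] at hs2
  have he1 : (P b - P c) / (b - c) = (P c - P b) / (c - b) := by
    rw [← neg_div_neg_eq]; ring_nf
  have he2 : (P a - P b) / (a - b) = (P b - P a) / (b - a) := by
    rw [← neg_div_neg_eq]; ring_nf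
  rw [he1] at hs2
  rw [he2] at hs1
  linarith


/-- If `α` lies outside `[P′(-∞), P′(+∞)]`, where `P(s) = log ∑_i t_i(s)` is the pressure of
the nonlinear transfer system, then the level set
`E(α) = {x : lim (1/n) ∑_{k=1}^n φ(x_k, x_{2k}) = α}` is empty. -/
theorem level_set_empty_outside_interval
    (m : ℕ) (hm : 2 ≤ m) (φ : Fin m → Fin m → ℝ)
    (hφ : ∃ i j k l, φ i j ≠ φ k l)
    (t : ℝ → Fin m → ℝ) (ht : ∀ s i, 0 < t s i)
    (heq : ∀ s i, (t s i) ^ 2 = ∑ j, Real.exp (s * φ i j) * t s j)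
    (P : ℝ → ℝ) (hP : ∀ s, P s = Real.log (∑ i, t s i))
    (Pm Pp : ℝ)
    (hPm : Tendsto (deriv P) atBot (nhds Pm))
    (hPp : Tendsto (deriv P) atTop (nhds Pp))
    (α : ℝ) (hα : α ∉ Set.Icc Pm Pp) :
    {x : ℕ → Fin m | Tendsto
      (fun n : ℕ => (n : ℝ)⁻¹ * ∑ k ∈ Icc 1 n, φ (x k) (x (2 * k)))
      atTop (nhds α)} = ∅ := by
  haveI : NeZero m := ⟨by omega⟩
  rw [Set.eq_empty_iff_forall_notMem]
  intro x hx
  simp only [Set.mem_setOf_eq] at hx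
  -- the pointwise Legendre-type bound
  have hKey : ∀ s : ℝ, s * α ≤ P s := fun s => by
    rw [hP s]; exact key_bound φ t ht heq x α hx s
  -- bound on φ
  have ne : (univ : Finset (Fin m)).Nonempty := univ_nonempty
  set Φ : ℝ := univ.sup' ne (fun i => univ.sup' ne (fun j => |φ i j|)) with hΦdef
  have hΦ : ∀ i j, |φ i j| ≤ Φ := fun i j =>
    le_trans (Finset.le_sup' (fun j => |φ i j|) (mem_univ j))
      (Finset.le_sup' (fun i => univ.sup' ne (fun j => |φ i j|)) (mem_univ i))
  have hΦ0 : 0 ≤ Φ := le_trans (abs_nonneg _) (hΦ ⟨0, by omega⟩ ⟨0, by omega⟩)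
  -- P is Lipschitz
  have hPdiff : ∀ a b : ℝ, P a - P b ≤ Φ * |a - b| := by
    intro a b
    rw [hP a, hP b]
    have hsum : ∑ i, t a i ≤ Real.exp (Φ * |a - b|) * ∑ i, t b i := by
      rw [Finset.mul_sum]
      refine Finset.sum_le_sum fun i _ => ?_
      have h1 := logt_lip φ t ht heq hΦ a b i
      calc t a i = Real.exp (Real.log (t a i)) := (Real.exp_log (ht a i)).symm
        _ ≤ Real.exp (Φ * |a - b| + Real.log (t b i)) := Real.exp_le_exp.2 (by linarith)
        _ = Real.exp (Φ * |a - b|) * t b i := by rw [Real.exp_add, Real.exp_log (ht b i)]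
    have hpos : (0:ℝ) < ∑ i, t a i := Finset.sum_pos (fun i _ => ht a i) ne
    have hposb : (0:ℝ) < ∑ i, t b i := Finset.sum_pos (fun i _ => ht b i) ne
    have := Real.log_le_log hpos hsum
    rw [Real.log_mul (Real.exp_ne_zero _) hposb.ne', Real.log_exp] at this
    linarith
  have hlip : LipschitzWith ⟨Φ, hΦ0⟩ P := by
    apply LipschitzWith.of_dist_le_mul
    intro a b
    rw [Real.dist_eq, Real.dist_eq]
    rw [abs_sub_le_iff]
    constructor
    · exact hPdiff a b
    · calc P b - P a ≤ Φ * |b - a| := hPdiff b a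
        _ = Φ * |a - b| := by rw [abs_sub_comm]
  -- P is convex
  have hconv : ConvexOn ℝ Set.univ P := by
    refine ⟨convex_univ, fun a _ b _ la mu hla hmu h1 => ?_⟩
    simp only [smul_eq_mul]
    rw [hP, hP, hP]
    have hstep1 : ∑ i, t (la * a + mu * b) i ≤
        ∑ i, Real.exp (la * Real.log (t a i) + mu * Real.log (t b i)) := by
      refine Finset.sum_le_sum fun i _ => ?_
      calc t (la * a + mu * b) i
          = Real.exp (Real.log (t (la * a + mu * b) i)) :=
            (Real.exp_log (ht _ i)).symm
        _ ≤ Real.exp (la * Real.log (t a i) + mu * Real.log (t b i)) :=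
            Real.exp_le_exp.2 (logt_convex φ t ht heq hla hmu h1 i)
    have hstep2 : ∑ i, Real.exp (la * Real.log (t a i) + mu * Real.log (t b i)) ≤
        (∑ i, Real.exp (Real.log (t a i))) ^ la * (∑ i, Real.exp (Real.log (t b i))) ^ mu :=
      hoelder_sum _ _ hla hmu h1
    have hea : ∑ i, Real.exp (Real.log (t a i)) = ∑ i, t a i :=
      Finset.sum_congr rfl fun i _ => Real.exp_log (ht a i)
    have heb : ∑ i, Real.exp (Real.log (t b i)) = ∑ i, t b i :=
      Finset.sum_congr rfl fun i _ => Real.exp_log (ht b i)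
    rw [hea, heb] at hstep2
    have hpos : (0:ℝ) < ∑ i, t (la * a + mu * b) i := Finset.sum_pos (fun i _ => ht _ i) ne
    have hposa : (0:ℝ) < ∑ i, t a i := Finset.sum_pos (fun i _ => ht a i) ne
    have hposb : (0:ℝ) < ∑ i, t b i := Finset.sum_pos (fun i _ => ht b i) ne
    have := Real.log_le_log hpos (le_trans hstep1 hstep2)
    rw [Real.log_mul (Real.rpow_pos_of_pos hposa la).ne' (Real.rpow_pos_of_pos hposb mu).ne',
      Real.log_rpow hposa, Real.log_rpow hposb] at this
    exact this
  -- conclude Pm ≤ α ≤ Pp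
  refine hα ⟨?_, ?_⟩
  · -- Pm ≤ α
    by_contra hcon
    push_neg at hcon
    set ε := Pm - α with hεdef
    have hε : 0 < ε := by simp only [hεdef]; linarith
    set q : ℝ := max 1 (P 0 / (ε / 2)) with hq
    have hq1 : (1:ℝ) ≤ q := le_max_left _ _
    have hqpos : (0:ℝ) < q := lt_of_lt_of_le one_pos hq1
    have hslope := Pm_le_slope hconv hlip hPm (a := -q) (b := 0) (by linarith)
    rw [le_div_iff₀ (by linarith : (0:ℝ) < 0 - -q)] at hslope
    have hPs : P (-q) ≤ P 0 + (-q) * Pm := by linarith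
    have h2 : P 0 / (ε / 2) ≤ q := le_max_right _ _
    have h3 : P 0 ≤ q * (ε / 2) := by
      rw [div_le_iff₀ (by positivity : (0:ℝ) < ε / 2)] at h2
      linarith
    have hK := hKey (-q)
    have hqε : 0 < q * ε := mul_pos hqpos hε
    have hεx : ε = Pm - α := hεdef
    nlinarith [hK, hPs, h3, hqε]
  · -- α ≤ Pp
    by_contra hcon
    push_neg at hcon
    set ε := α - Pp with hεdef
    have hε : 0 < ε := by simp only [hεdef]; linarith
    set q : ℝ := max 1 (P 0 / (ε / 2)) with hq
    have hq1 : (1:ℝ) ≤ q := le_max_left _ _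
    have hqpos : (0:ℝ) < q := lt_of_lt_of_le one_pos hq1
    have hslope := slope_le_Pp hconv hlip hPp (a := 0) (b := q) (by linarith)
    rw [div_le_iff₀ (by linarith : (0:ℝ) < q - 0)] at hslope
    have hPs : P q ≤ P 0 + q * Pp := by linarith
    have h2 : P 0 / (ε / 2) ≤ q := le_max_right _ _
    have h3 : P 0 ≤ q * (ε / 2) := by
      rw [div_le_iff₀ (by positivity : (0:ℝ) < ε / 2)] at h2
      linarith
    have hK := hKey q
    have hqε : 0 < q * ε := mul_pos hqpos hε
    have hεx : ε = α - Pp := hεdef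
    nlinarith [hK, hPs, h3, hqε]
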